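/- Let V be a finite-dimensional real inner product space and let F be a finite linearly independent subset of V. For each subset Δ ⊆ F define C^Δ = {H ∈ V : ⟪α, H⟫ > 0 for every α ∈ Δ, and ⟪β, H⟫ = 0 for every β ∈ F \ Δ}. Then: (1) for every Δ₁ ⊆ F, the topological closure of C^{Δ₁} equals the union ⋃_{Δ ⊆ Δ₁} C^Δ, and the sets C^Δ for distinct subsets Δ ⊆ Δ₁ are pairwise disjoint; (2) for all Δ₁, Δ₂ ⊆ F, one has Δ₁ ⊆ Δ₂ if and only if C^{Δ₁} is contained in the closure of C^{Δ₂}. -/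

import Mathlib

open scoped RealInnerProductSpace

theorem aux_dual_stmt3 {V : Type*} [NormedAddCommGroup V] [InnerProductSpace ℝ V]
    [FiniteDimensional ℝ V] (F : Finset V)
    (hF : LinearIndependent ℝ (fun x : F => (x : V))) (α : V) (hα : α ∈ F) :
    ∃ v : V, 0 < ⟪α, v⟫ ∧ ∀ β ∈ F, β ≠ α → ⟪β, v⟫ = 0 := by
  classical
  set W : Submodule ℝ V := Submodule.span ℝ (↑(F.erase α) : Set V) with hW
  have hnot : α ∉ W := by
    have h1 : ((fun x : F => (x : V)) '' {x : F | (x : V) ≠ α}) = (↑(F.erase α) : Set V) := by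
      ext y
      simp only [Set.mem_image, Set.mem_setOf_eq, Finset.coe_erase, Set.mem_diff,
        Finset.mem_coe, Set.mem_singleton_iff]
      constructor
      · rintro ⟨x, hx, rfl⟩; exact ⟨x.2, hx⟩
      · rintro ⟨hy, hne⟩; exact ⟨⟨y, hy⟩, hne, rfl⟩
    have h2 := hF.notMem_span_image (s := {x : F | (x : V) ≠ α}) (x := (⟨α, hα⟩ : F))
      (by simp)
    rw [h1] at h2
    exact h2
  set v : V := α - (Submodule.orthogonalProjection W α : V) with hv
  have hvW : v ∈ Wᗮ := Submodule.sub_starProjection_mem_orthogonal α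
  have hdec : α = (Submodule.orthogonalProjection W α : V) + v := by rw [hv]; abel
  have hvne : v ≠ 0 := by
    intro h
    apply hnot
    rw [h, add_zero] at hdec
    rw [hdec]
    exact (Submodule.orthogonalProjection W α).2
  refine ⟨v, ?_, ?_⟩
  · have h0 : ⟪(Submodule.orthogonalProjection W α : V), v⟫ = 0 :=
      (W.mem_orthogonal v).mp hvW _ (Submodule.orthogonalProjection W α).2
    have h3 : ⟪α, v⟫ = ⟪v, v⟫ := by
      conv_lhs => rw [hdec]
      rw [inner_add_left, h0, zero_add]
    rw [h3]
    rw [real_inner_self_eq_norm_sq]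
    exact pow_pos (norm_pos_iff.mpr hvne) 2
  · intro β hβ hne
    exact (W.mem_orthogonal v).mp hvW β
      (Submodule.subset_span (by simp [Finset.mem_erase, hβ, hne]))

theorem aux_nonempty_stmt3 {V : Type*} [NormedAddCommGroup V] [InnerProductSpace ℝ V]
    [FiniteDimensional ℝ V] (F : Finset V)
    (hF : LinearIndependent ℝ (fun x : F => (x : V))) (Δ : Finset V) (hΔ : Δ ⊆ F) :
    ∃ H : V, (∀ α ∈ Δ, 0 < ⟪α, H⟫) ∧ ∀ β ∈ F, β ∉ Δ → ⟪β, H⟫ = 0 := by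
  classical
  choose f hf1 hf2 using fun (α : V) (hα : α ∈ Δ) => aux_dual_stmt3 F hF α (hΔ hα)
  refine ⟨∑ x ∈ Δ.attach, f x.1 x.2, ?_, ?_⟩
  · intro α hα
    rw [inner_sum]
    have : ∀ x ∈ Δ.attach, 0 ≤ ⟪α, f x.1 x.2⟫ := by
      intro x _
      rcases eq_or_ne (x : V) α with h | h
      · subst h; exact le_of_lt (hf1 x.1 x.2)
      · rw [hf2 x.1 x.2 α (hΔ hα) h.symm]
    calc (0:ℝ) < ⟪α, f α hα⟫ := hf1 α hα
      _ ≤ ∑ x ∈ Δ.attach, ⟪α, f x.1 x.2⟫ :=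
        Finset.single_le_sum this (Finset.mem_attach _ ⟨α, hα⟩)
  · intro β hβ hβΔ
    rw [inner_sum]
    refine Finset.sum_eq_zero fun x _ => ?_
    exact hf2 x.1 x.2 β hβ (fun h => hβΔ (h ▸ x.2))

/-- Decomposition of the closed Weyl chamber into its faces `C^Δ`:
for a finite linearly independent set `F` in a finite-dimensional real inner
product space and `C^Δ = {H | ⟪α,H⟫ > 0 (α ∈ Δ), ⟪β,H⟫ = 0 (β ∈ F \ Δ)}`,
(1) the closure of `C^{Δ₁}` is the disjoint union of the `C^Δ` over `Δ ⊆ Δ₁`;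
(2) `Δ₁ ⊆ Δ₂` iff `C^{Δ₁} ⊆ closure (C^{Δ₂})`. -/
theorem stmt_3 {V : Type*} [NormedAddCommGroup V] [InnerProductSpace ℝ V]
    [FiniteDimensional ℝ V] (F : Finset V)
    (hF : LinearIndependent ℝ (fun x : F => (x : V)))
    (C : Finset V → Set V)
    (hC : ∀ Δ : Finset V, C Δ =
      {H : V | (∀ α ∈ Δ, 0 < ⟪α, H⟫) ∧ ∀ β ∈ F, β ∉ Δ → ⟪β, H⟫ = 0}) :
    (∀ Δ₁ : Finset V, Δ₁ ⊆ F →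
      (closure (C Δ₁) = ⋃ Δ ∈ Δ₁.powerset, C Δ) ∧
      (∀ Δ ∈ Δ₁.powerset, ∀ Δ' ∈ Δ₁.powerset, Δ ≠ Δ' → Disjoint (C Δ) (C Δ'))) ∧
    (∀ Δ₁ Δ₂ : Finset V, Δ₁ ⊆ F → Δ₂ ⊆ F →
      (Δ₁ ⊆ Δ₂ ↔ C Δ₁ ⊆ closure (C Δ₂))) := by
  classical
  -- every face is in the closure of a larger face
  have hsub : ∀ Δ Δ₁ : Finset V, Δ ⊆ Δ₁ → Δ₁ ⊆ F → C Δ ⊆ closure (C Δ₁) := by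
    intro Δ Δ₁ hΔΔ₁ hΔ₁F H hH
    obtain ⟨H₁, hH₁⟩ := aux_nonempty_stmt3 F hF Δ₁ hΔ₁F
    rw [hC Δ] at hH
    have htend : Filter.Tendsto (fun t : ℝ => H + t • H₁) (nhdsWithin 0 (Set.Ioi 0)) (nhds H) := by
      have hc : Continuous (fun t : ℝ => H + t • H₁) :=
        continuous_const.add (continuous_id.smul continuous_const)
      have := hc.tendsto' 0 H (by simp)
      exact this.mono_left nhdsWithin_le_nhds
    refine mem_closure_of_tendsto htend ?_
    filter_upwards [self_mem_nhdsWithin] with t ht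
    rw [hC Δ₁]
    constructor
    · intro α hα
      rw [inner_add_right, real_inner_smul_right]
      have h1 : 0 ≤ ⟪α, H⟫ := by
        by_cases hαΔ : α ∈ Δ
        · exact le_of_lt (hH.1 α hαΔ)
        · rw [hH.2 α (hΔ₁F hα) hαΔ]
      have h2 : 0 < t * ⟪α, H₁⟫ := mul_pos ht (hH₁.1 α hα)
      linarith
    · intro β hβ hβΔ₁
      rw [inner_add_right, real_inner_smul_right,
        hH.2 β hβ (fun h => hβΔ₁ (hΔΔ₁ h)), hH₁.2 β hβ hβΔ₁]
      ring
  -- disjointness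
  have hdisj : ∀ Δ Δ' : Finset V, Δ ⊆ F → Δ' ⊆ F → Δ ≠ Δ' → Disjoint (C Δ) (C Δ') := by
    intro Δ Δ' hΔF hΔ'F hne
    rw [Set.disjoint_left]
    intro H hH hH'
    rw [hC Δ] at hH
    rw [hC Δ'] at hH'
    rcases Finset.not_subset.mp (fun h => hne (Finset.Subset.antisymm h
      (fun x hx => by_contra fun hxn => by
        have h1 := hH'.1 x hx
        have h2 := hH.2 x (hΔ'F hx) hxn
        rw [h2] at h1; exact lt_irrefl 0 h1))) with ⟨α, hαΔ, hαΔ'⟩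
    · have h1 := hH.1 α hαΔ
      have h2 := hH'.2 α (hΔF hαΔ) hαΔ'
      rw [h2] at h1; exact lt_irrefl 0 h1
  -- first part: closure decomposition
  have hclos : ∀ Δ₁ : Finset V, Δ₁ ⊆ F →
      closure (C Δ₁) = ⋃ Δ ∈ Δ₁.powerset, C Δ := by
    intro Δ₁ hΔ₁
    apply subset_antisymm
    · -- closure ⊆ union
      set S : Set V := {H : V | (∀ α ∈ Δ₁, 0 ≤ ⟪α, H⟫) ∧ ∀ β ∈ F, β ∉ Δ₁ → ⟪β, H⟫ = 0} with hS
      have hSclosed : IsClosed S := by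
        have : S = (⋂ α ∈ Δ₁, {H : V | 0 ≤ ⟪α, H⟫}) ∩
            (⋂ β ∈ F, ⋂ (_ : β ∉ Δ₁), {H : V | ⟪β, H⟫ = 0}) := by
          ext H; simp [hS, Set.mem_iInter]
        rw [this]
        refine IsClosed.inter ?_ ?_
        · exact isClosed_biInter fun α _ =>
            isClosed_le continuous_const (continuous_const.inner continuous_id)
        · refine isClosed_biInter fun β _ => isClosed_iInter fun _ =>
            isClosed_eq (continuous_const.inner continuous_id) continuous_const
      have hCS : C Δ₁ ⊆ S := by
        intro H hH
        rw [hC Δ₁] at hH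
        exact ⟨fun α hα => le_of_lt (hH.1 α hα), hH.2⟩
      have h1 : closure (C Δ₁) ⊆ S := closure_minimal hCS hSclosed
      intro H hH
      have hHS := h1 hH
      set Δ : Finset V := Δ₁.filter (fun α => 0 < ⟪α, H⟫) with hΔdef
      have hmem : H ∈ C Δ := by
        rw [hC Δ]
        constructor
        · intro α hα
          exact (Finset.mem_filter.mp hα).2
        · intro β hβ hβΔ
          by_cases hβΔ₁ : β ∈ Δ₁
          · have hge := hHS.1 β hβΔ₁
            rcases lt_or_eq_of_le hge with hlt | heq
            · exact absurd (Finset.mem_filter.mpr ⟨hβΔ₁, hlt⟩) hβΔ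
            · exact heq.symm
          · exact hHS.2 β hβ hβΔ₁
      exact Set.mem_biUnion (Finset.mem_powerset.mpr (Finset.filter_subset _ _)) hmem
    · -- union ⊆ closure
      intro H hH
      rcases Set.mem_iUnion₂.mp hH with ⟨Δ, hΔ, hHΔ⟩
      exact hsub Δ Δ₁ (Finset.mem_powerset.mp hΔ) hΔ₁ hHΔ
  refine ⟨fun Δ₁ hΔ₁ => ⟨hclos Δ₁ hΔ₁, ?_⟩, ?_⟩
  · intro Δ hΔ Δ' hΔ' hne
    exact hdisj Δ Δ' ((Finset.mem_powerset.mp hΔ).trans hΔ₁)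
      ((Finset.mem_powerset.mp hΔ').trans hΔ₁) hne
  · intro Δ₁ Δ₂ hΔ₁F hΔ₂F
    constructor
    · intro h12
      exact hsub Δ₁ Δ₂ h12 hΔ₂F
    · intro hcl
      obtain ⟨H, hH⟩ := aux_nonempty_stmt3 F hF Δ₁ hΔ₁F
      have hHC : H ∈ C Δ₁ := by rw [hC Δ₁]; exact hH
      have := hcl hHC
      rw [hclos Δ₂ hΔ₂F] at this
      rcases Set.mem_iUnion₂.mp this with ⟨Δ, hΔ, hHΔ⟩
      rw [hC Δ] at hHΔ
      have hΔsub : Δ ⊆ Δ₂ := Finset.mem_powerset.mp hΔ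
      intro α hα
      by_contra hαΔ₂
      have hαΔ : α ∉ Δ := fun h => hαΔ₂ (hΔsub h)
      have h1 := hH.1 α hα
      have h2 := hHΔ.2 α (hΔ₁F hα) hαΔ
      rw [h2] at h1; exact lt_irrefl 0 h1
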